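/- For n ≥ 2 and i ∈ {0,...,n−2}, the stability space of the projective-injective B(n)-module R(i) equals {v = (v_n,...,v_0) ∈ ℝ^{n+1} : v_i = v_{i+1} = v_{i+2} = 0}. In particular it has codimension 3 and is not a wall. -/

import Mathlib

/-!  Representations of the quiver `Q(n)` with relations `I(n)`, i.e. modules
over the special biserial algebra `B(n) = k Q(n) / I(n)`.

`Q(n)` has vertices `0,…,n` and arrows `α i : i+1 → i`, `β i : i → i+1` for
`0 ≤ i ≤ n-1`; `I(n)` is generated by `β i α i - α (i+1) β (i+1)`,
`α i α (i+1)`, `β (i+1) β i` (for `0 ≤ i ≤ n-2`) and `α 0 β 0`.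

A finite dimensional representation is described, after choosing bases, by its
dimension vector `d` and linear maps between the coordinate spaces
`Fin (d i) → k` satisfying the relations.  (Vertices are indexed by `ℕ`, with
`d i = 0` for `i > n`.) -/

/-- A finite dimensional representation of `(Q(n), I(n))`, equivalently a
finite dimensional `B(n)`-module. -/
structure QRep (k : Type*) [Field k] (n : ℕ) where
  /-- the dimension vector -/
  d : ℕ → ℕ
  /-- only the vertices `0,…,n` carry a nonzero space -/
  hd : ∀ i, n < i → d i = 0
  /-- the map attached to the arrow `α i : i+1 → i` -/
  α : ∀ i : ℕ, (Fin (d (i + 1)) → k) →ₗ[k] (Fin (d i) → k)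
  /-- the map attached to the arrow `β i : i → i+1` -/
  β : ∀ i : ℕ, (Fin (d i) → k) →ₗ[k] (Fin (d (i + 1)) → k)
  /-- the binomial relations `β i α i = α (i+1) β (i+1)`, `0 ≤ i ≤ n-2` -/
  rel_comm : ∀ i, i + 2 ≤ n → (β i).comp (α i) = (α (i + 1)).comp (β (i + 1))
  /-- the relations `α i α (i+1) = 0`, `0 ≤ i ≤ n-2` -/
  rel_aa : ∀ i, i + 2 ≤ n → (α i).comp (α (i + 1)) = 0
  /-- the relations `β (i+1) β i = 0`, `0 ≤ i ≤ n-2` -/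
  rel_bb : ∀ i, i + 2 ≤ n → (β (i + 1)).comp (β i) = 0
  /-- the relation `α 0 β 0 = 0` -/
  rel_ab : (α 0).comp (β 0) = 0

/-- A homomorphism of representations of `(Q(n), I(n))`: a family of linear
maps commuting with the structure maps. -/
structure RepHom {k : Type*} [Field k] {n : ℕ} (M N : QRep k n) where
  f : ∀ i : ℕ, (Fin (M.d i) → k) →ₗ[k] (Fin (N.d i) → k)
  commα : ∀ i, (f i).comp (M.α i) = (N.α i).comp (f (i + 1))
  commβ : ∀ i, (f (i + 1)).comp (M.β i) = (N.β i).comp (f i)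

/-- Two representations are isomorphic if there is a homomorphism all of whose
components are bijective. -/
def RepIso {k : Type*} [Field k] {n : ℕ} (M N : QRep k n) : Prop :=
  ∃ φ : RepHom M N, ∀ i, Function.Bijective (φ.f i)

/-- A representation is indecomposable iff it is nonzero and its endomorphism
ring has no nontrivial idempotents. -/
def Indec {k : Type*} [Field k] {n : ℕ} (M : QRep k n) : Prop :=
  (∃ i, M.d i ≠ 0) ∧
    ∀ e : RepHom M M, (∀ i, (e.f i).comp (e.f i) = e.f i) →
      (∀ i, e.f i = 0) ∨ (∀ i, e.f i = LinearMap.id)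

/-- A subrepresentation (submodule) of a representation `M`: a family of
subspaces invariant under all the structure maps. -/
structure SubRep {k : Type*} [Field k] {n : ℕ} (M : QRep k n) where
  W : ∀ i : ℕ, Submodule k (Fin (M.d i) → k)
  mapα : ∀ i, (W (i + 1)).map (M.α i) ≤ W i
  mapβ : ∀ i, (W i).map (M.β i) ≤ W (i + 1)

/-- The dimension vector of a subrepresentation. -/
noncomputable def SubRep.dim {k : Type*} [Field k] {n : ℕ} {M : QRep k n} (N : SubRep M) (i : ℕ) : ℕ :=
  Module.finrank k (N.W i)

/-- The standard pairing `⟨v, d⟩ = ∑_{i=0}^{n} v i * d i` between a vector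
`v ∈ ℝ^{n+1}` and a dimension vector `d`. -/
noncomputable def pairing (n : ℕ) (v : Fin (n + 1) → ℝ) (d : ℕ → ℕ) : ℝ :=
  ∑ i : Fin (n + 1), v i * d i

/-- King's stability space `D(M) ⊆ ℝ^{n+1}` of a representation `M`: the set of
`v` with `⟨v, dim M⟩ = 0` and `⟨v, dim N⟩ ≤ 0` for every nonzero proper
subrepresentation `N` of `M`. -/
def StabSpace {k : Type*} [Field k] {n : ℕ} (M : QRep k n) : Set (Fin (n + 1) → ℝ) :=
  {v | pairing n v M.d = 0 ∧
    ∀ N : SubRep M, (∃ i, N.W i ≠ ⊥) → (∃ i, N.W i ≠ ⊤) →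
      pairing n v N.dim ≤ 0}

section Aux16

variable {k : Type*} [Field k] {n : ℕ}

lemma pairing_three (i n : ℕ) (hi : i + 2 ≤ n) (v : Fin (n + 1) → ℝ) (d : ℕ → ℕ)
    (h0 : ∀ j : Fin (n + 1), (j : ℕ) ≠ i → (j : ℕ) ≠ i + 1 → (j : ℕ) ≠ i + 2 → v j * d j = 0) :
    pairing n v d =
      v ⟨i, by omega⟩ * d i + v ⟨i + 1, by omega⟩ * d (i + 1) + v ⟨i + 2, by omega⟩ * d (i + 2) := by
  classical
  set a : Fin (n + 1) := ⟨i, by omega⟩ with ha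
  set b : Fin (n + 1) := ⟨i + 1, by omega⟩ with hb
  set c : Fin (n + 1) := ⟨i + 2, by omega⟩ with hc
  have habc : pairing n v d = ∑ j ∈ ({a, b, c} : Finset (Fin (n + 1))), v j * d j := by
    rw [pairing]
    refine (Finset.sum_subset (Finset.subset_univ _) ?_).symm
    intro x _ hx
    simp only [Finset.mem_insert, Finset.mem_singleton, not_or] at hx
    exact h0 x (by simpa [Fin.ext_iff, ha] using hx.1) (by simpa [Fin.ext_iff, hb] using hx.2.1)
      (by simpa [Fin.ext_iff, hc] using hx.2.2)
  have hab : a ≠ b := by simp [ha, hb, Fin.ext_iff]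
  have hac : a ≠ c := by simp [ha, hc, Fin.ext_iff]
  have hbc : b ≠ c := by simp [hb, hc, Fin.ext_iff]
  rw [habc, Finset.sum_insert (by simp [hab, hac]), Finset.sum_insert (by simp [hbc]),
    Finset.sum_singleton]
  have h1 : (a : ℕ) = i := rfl
  have h2 : (b : ℕ) = i + 1 := rfl
  have h3 : (c : ℕ) = i + 2 := rfl
  rw [h1, h2, h3]
  ring

lemma SubRep.dim_zero {M : QRep k n} (N : SubRep M) {j : ℕ} (h : M.d j = 0) : N.dim j = 0 := by
  have h1 : Module.finrank k (N.W j) ≤ Module.finrank k (Fin (M.d j) → k) := Submodule.finrank_le _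
  have h2 : Module.finrank k (Fin (M.d j) → k) = M.d j := Module.finrank_fin_fun k
  simp only [SubRep.dim]
  omega

def subW (M : QRep k n) (i : ℕ) (a b : Bool) (j : ℕ) : Submodule k (Fin (M.d j) → k) where
  carrier := {x | (∀ c : Fin (M.d j), j = i + 1 → c.val = 0 → x c = 0) ∧
      (¬(j = i + 1 ∨ (j = i ∧ a = true) ∨ (j = i + 2 ∧ b = true)) → x = 0)}
  add_mem' := by
    rintro x y ⟨hx1, hx2⟩ ⟨hy1, hy2⟩
    exact ⟨fun c h1 h2 => by simp [Pi.add_apply, hx1 c h1 h2, hy1 c h1 h2],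
      fun h => by rw [hx2 h, hy2 h]; simp⟩
  zero_mem' := ⟨fun _ _ _ => rfl, fun _ => rfl⟩
  smul_mem' := by
    rintro r x ⟨hx1, hx2⟩
    exact ⟨fun c h1 h2 => by simp [hx1 c h1 h2], fun h => by rw [hx2 h]; simp⟩

lemma mem_subW {M : QRep k n} {i : ℕ} {a b : Bool} {j : ℕ} {x : Fin (M.d j) → k} :
    x ∈ subW M i a b j ↔ (∀ c : Fin (M.d j), j = i + 1 → c.val = 0 → x c = 0) ∧
      (¬(j = i + 1 ∨ (j = i ∧ a = true) ∨ (j = i + 2 ∧ b = true)) → x = 0) := Iff.rfl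

section Maps

variable {M : QRep k n} {i : ℕ}
variable (hα : ∀ j (x : Fin (M.d (j + 1)) → k) (r : Fin (M.d j)), M.α j x r =
      ∑ c : Fin (M.d (j + 1)),
        (if (j = i ∧ r.val = 0 ∧ c.val = 0) ∨ (j = i + 1 ∧ r.val = 1 ∧ c.val = 0)
          then (1 : k) else 0) * x c)
variable (hβ : ∀ j (x : Fin (M.d j) → k) (r : Fin (M.d (j + 1))), M.β j x r =
      ∑ c : Fin (M.d j),
        (if (j = i ∧ r.val = 1 ∧ c.val = 0) ∨ (j = i + 1 ∧ r.val = 0 ∧ c.val = 0)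
          then (1 : k) else 0) * x c)

include hα in
lemma alpha_zero {j : ℕ} (h1 : j ≠ i) (h2 : j ≠ i + 1) (x : Fin (M.d (j + 1)) → k) :
    M.α j x = 0 := by
  funext r
  simp only [Pi.zero_apply]
  rw [hα]
  exact Finset.sum_eq_zero fun c _ => by rw [if_neg (by tauto), zero_mul]

include hβ in
lemma beta_zero {j : ℕ} (h1 : j ≠ i) (h2 : j ≠ i + 1) (x : Fin (M.d j) → k) :
    M.β j x = 0 := by
  funext r
  simp only [Pi.zero_apply]
  rw [hβ]
  exact Finset.sum_eq_zero fun c _ => by rw [if_neg (by tauto), zero_mul]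

include hα in
lemma alpha_line (y : Fin (M.d (i + 1)) → k) (hy : ∀ c : Fin (M.d (i + 1)), c.val = 0 → y c = 0) :
    M.α i y = 0 := by
  funext r
  simp only [Pi.zero_apply]
  rw [hα]
  refine Finset.sum_eq_zero fun c _ => ?_
  rcases eq_or_ne c.val 0 with h | h
  · rw [hy c h, mul_zero]
  · rw [if_neg (by rintro (⟨_, _, h0⟩ | ⟨h0, _⟩) <;> omega), zero_mul]

include hβ in
lemma beta_line (y : Fin (M.d (i + 1)) → k) (hy : ∀ c : Fin (M.d (i + 1)), c.val = 0 → y c = 0) :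
    M.β (i + 1) y = 0 := by
  funext r
  simp only [Pi.zero_apply]
  rw [hβ]
  refine Finset.sum_eq_zero fun c _ => ?_
  rcases eq_or_ne c.val 0 with h | h
  · rw [hy c h, mul_zero]
  · rw [if_neg (by rintro (⟨h0, _⟩ | ⟨_, _, h0⟩) <;> omega), zero_mul]

include hα in
lemma alpha_into_line (x : Fin (M.d (i + 2)) → k) (c : Fin (M.d (i + 1))) (hc : c.val = 0) :
    M.α (i + 1) x c = 0 := by
  rw [hα]
  exact Finset.sum_eq_zero fun c' _ => by
    rw [if_neg (by rintro (⟨h0, _⟩ | ⟨_, h0, _⟩) <;> omega), zero_mul]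

include hβ in
lemma beta_into_line (x : Fin (M.d i) → k) (c : Fin (M.d (i + 1))) (hc : c.val = 0) :
    M.β i x c = 0 := by
  rw [hβ]
  exact Finset.sum_eq_zero fun c' _ => by
    rw [if_neg (by rintro (⟨_, h0, _⟩ | ⟨h0, _⟩) <;> omega), zero_mul]

def subR (a b : Bool) : SubRep M where
  W := subW M i a b
  mapα j := by
    rintro x ⟨y, hy, rfl⟩
    replace hy : _ ∧ _ := hy
    refine ⟨fun c hj hc => ?_, fun hQ => ?_⟩
    · subst hj
      exact alpha_into_line hα y c hc
    · by_cases hQ1 : (j + 1 = i + 1 ∨ (j + 1 = i ∧ a = true) ∨ (j + 1 = i + 2 ∧ b = true))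
      · rcases hQ1 with h | ⟨h, _⟩ | ⟨h, _⟩
        · have hj : j = i := by omega
          subst hj
          exact alpha_line hα y fun c hc => hy.1 c rfl hc
        · exact alpha_zero hα (by omega) (by omega) y
        · exact absurd (Or.inl (by omega)) hQ
      · rw [hy.2 hQ1, map_zero]
  mapβ j := by
    rintro x ⟨y, hy, rfl⟩
    replace hy : _ ∧ _ := hy
    refine ⟨fun c hj hc => ?_, fun hQ1 => ?_⟩
    · have hj' : j = i := by omega
      subst hj'
      exact beta_into_line hβ y c hc
    · by_cases hQ : (j = i + 1 ∨ (j = i ∧ a = true) ∨ (j = i + 2 ∧ b = true))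
      · rcases hQ with h | ⟨h, _⟩ | ⟨h, _⟩
        · subst h
          exact beta_line hβ y fun c hc => hy.1 c rfl hc
        · exact absurd (Or.inl (by omega)) hQ1
        · exact beta_zero hβ (by omega) (by omega) y
      · rw [hy.2 hQ, map_zero]

lemma subR_W (a b : Bool) (j : ℕ) : (subR hα hβ a b).W j = subW M i a b j := rfl

end Maps

variable {M : QRep k n} {i : ℕ}

lemma subW_bot {a b : Bool} {j : ℕ}
    (h : ¬(j = i + 1 ∨ (j = i ∧ a = true) ∨ (j = i + 2 ∧ b = true))) :
    subW M i a b j = ⊥ := by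
  ext x
  rw [mem_subW, Submodule.mem_bot]
  constructor
  · rintro ⟨_, h2⟩; exact h2 h
  · rintro rfl; exact ⟨fun _ _ _ => rfl, fun _ => rfl⟩

lemma subW_top {a b : Bool} {j : ℕ} (hji : j ≠ i + 1)
    (h : j = i + 1 ∨ (j = i ∧ a = true) ∨ (j = i + 2 ∧ b = true)) :
    subW M i a b j = ⊤ := by
  ext x
  rw [mem_subW]
  simp only [Submodule.mem_top, iff_true]
  exact ⟨fun c hc => absurd hc hji, fun hq => absurd h hq⟩

lemma finrank_subW_succ (hd2 : M.d (i + 1) = 2) (a b : Bool) :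
    Module.finrank k (subW M i a b (i + 1)) = 1 := by
  have h0 : 0 < M.d (i + 1) := by omega
  set p : (Fin (M.d (i + 1)) → k) →ₗ[k] k :=
    LinearMap.proj (R := k) (φ := fun _ : Fin (M.d (i + 1)) => k) ⟨0, h0⟩ with hp
  have hker : subW M i a b (i + 1) = LinearMap.ker p := by
    ext x
    rw [mem_subW, LinearMap.mem_ker]
    constructor
    · rintro ⟨h1, _⟩; exact h1 ⟨0, h0⟩ rfl rfl
    · intro hx
      refine ⟨fun c _ hc => ?_, fun hq => absurd (Or.inl rfl) hq⟩
      have hce : c = ⟨0, h0⟩ := Fin.ext hc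
      rw [hce]; exact hx
  have hsur : LinearMap.range p = ⊤ := by
    rw [LinearMap.range_eq_top]
    intro r
    exact ⟨fun _ => r, rfl⟩
  have hrn := LinearMap.finrank_range_add_finrank_ker p
  rw [hsur, finrank_top, Module.finrank_self] at hrn
  have hfin : Module.finrank k (Fin (M.d (i + 1)) → k) = M.d (i + 1) := Module.finrank_fin_fun k
  rw [hker]
  omega

lemma finrank_subW_i (hd1 : M.d i = 1) (a b : Bool) :
    Module.finrank k (subW M i a b i) = if a = true then 1 else 0 := by
  cases a
  · rw [subW_bot (by rintro (h | ⟨_, h⟩ | ⟨h, _⟩) <;> first | omega | simp at h)]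
    simp [finrank_bot]
  · rw [subW_top (by omega) (Or.inr (Or.inl ⟨rfl, rfl⟩)), finrank_top, Module.finrank_fin_fun, hd1]
    simp

lemma finrank_subW_i2 (hd3 : M.d (i + 2) = 1) (a b : Bool) :
    Module.finrank k (subW M i a b (i + 2)) = if b = true then 1 else 0 := by
  cases b
  · rw [subW_bot (by rintro (h | ⟨h, _⟩ | ⟨_, h⟩) <;> first | omega | simp at h)]
    simp [finrank_bot]
  · rw [subW_top (by omega) (Or.inr (Or.inr ⟨rfl, rfl⟩)), finrank_top, Module.finrank_fin_fun, hd3]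
    simp

lemma subW_succ_ne_bot (hd2 : M.d (i + 1) = 2) (a b : Bool) : subW M i a b (i + 1) ≠ ⊥ := by
  intro h
  have he1 : (fun c : Fin (M.d (i + 1)) => if c.val = 1 then (1 : k) else 0) ∈ subW M i a b (i + 1) :=
    ⟨fun c _ hc => by simp [hc], fun hq => absurd (Or.inl rfl) hq⟩
  rw [h, Submodule.mem_bot] at he1
  have h2 := congrFun he1 ⟨1, by omega⟩
  simp at h2

lemma subW_succ_ne_top (hd2 : M.d (i + 1) = 2) (a b : Bool) : subW M i a b (i + 1) ≠ ⊤ := by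
  intro h
  have he0 : (fun _ : Fin (M.d (i + 1)) => (1 : k)) ∈ subW M i a b (i + 1) := by
    rw [h]; trivial
  exact one_ne_zero (he0.1 ⟨0, by omega⟩ rfl rfl)

end Aux16

/-- for `n ≥ 2` and `i ∈ {0,…,n-2}`, the stability space of the
projective-injective `B(n)`-module `R(i)` — the representation with `k` at the
vertices `i` and `i+2`, `k²` at vertex `i+1`, `0` elsewhere, with
`α i = β (i+1) = [1 0]` and `β i = α (i+1) = [0 1]ᵀ` — equals
`{v ∈ ℝ^{n+1} : v i = v (i+1) = v (i+2) = 0}`.  In particular it has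
codimension 3 (dimension `n-2`) and is not a wall (its dimension is not `n`). -/
theorem stmt_16 (k : Type*) [Field k] (n i : ℕ) (hn : 2 ≤ n) (hi : i + 2 ≤ n)
    (M : QRep k n)
    (hd : ∀ j, M.d j = if j = i + 1 then 2 else if j = i ∨ j = i + 2 then 1 else 0)
    (hα : ∀ j (x : Fin (M.d (j + 1)) → k) (r : Fin (M.d j)), M.α j x r =
      ∑ c : Fin (M.d (j + 1)),
        (if (j = i ∧ r.val = 0 ∧ c.val = 0) ∨ (j = i + 1 ∧ r.val = 1 ∧ c.val = 0)
          then (1 : k) else 0) * x c)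
    (hβ : ∀ j (x : Fin (M.d j) → k) (r : Fin (M.d (j + 1))), M.β j x r =
      ∑ c : Fin (M.d j),
        (if (j = i ∧ r.val = 1 ∧ c.val = 0) ∨ (j = i + 1 ∧ r.val = 0 ∧ c.val = 0)
          then (1 : k) else 0) * x c) :
    StabSpace M =
      {v : Fin (n + 1) → ℝ | v ⟨i, by omega⟩ = 0 ∧ v ⟨i + 1, by omega⟩ = 0 ∧
        v ⟨i + 2, by omega⟩ = 0} ∧
    ∃ S : Submodule ℝ (Fin (n + 1) → ℝ),
      (S : Set (Fin (n + 1) → ℝ)) = StabSpace M ∧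
      Module.finrank ℝ S = n - 2 ∧ Module.finrank ℝ S ≠ n := by
  classical
  have hd1 : M.d i = 1 := by rw [hd, if_neg (by omega), if_pos (Or.inl rfl)]
  have hd2 : M.d (i + 1) = 2 := by rw [hd, if_pos rfl]
  have hd3 : M.d (i + 2) = 1 := by rw [hd, if_neg (by omega), if_pos (Or.inr rfl)]
  have hdz : ∀ j, j ≠ i → j ≠ i + 1 → j ≠ i + 2 → M.d j = 0 := by
    intro j h1 h2 h3
    rw [hd, if_neg h2, if_neg (by tauto)]
  have hset : StabSpace M = {v : Fin (n + 1) → ℝ | v ⟨i, by omega⟩ = 0 ∧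
      v ⟨i + 1, by omega⟩ = 0 ∧ v ⟨i + 2, by omega⟩ = 0} := by
    ext v
    simp only [StabSpace, Set.mem_setOf_eq]
    constructor
    · rintro ⟨h1, h2⟩
      rw [pairing_three i n hi v M.d
        (fun j hj1 hj2 hj3 => by rw [hdz j hj1 hj2 hj3]; simp), hd1, hd2, hd3] at h1
      push_cast at h1
      have key : ∀ a b : Bool, v ⟨i, by omega⟩ * (if a = true then 1 else 0) +
          v ⟨i + 1, by omega⟩ * 1 + v ⟨i + 2, by omega⟩ * (if b = true then 1 else 0) ≤ 0 := by
        intro a b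
        have h := h2 (subR hα hβ a b) ⟨i + 1, by rw [subR_W]; exact subW_succ_ne_bot hd2 a b⟩
          ⟨i + 1, by rw [subR_W]; exact subW_succ_ne_top hd2 a b⟩
        rw [pairing_three i n hi v (subR hα hβ a b).dim (fun j hj1 hj2 hj3 => by
          rw [SubRep.dim_zero _ (hdz j hj1 hj2 hj3)]; simp)] at h
        rw [show (subR hα hβ a b).dim i = _ from finrank_subW_i hd1 a b,
          show (subR hα hβ a b).dim (i + 1) = _ from finrank_subW_succ hd2 a b,
          show (subR hα hβ a b).dim (i + 2) = _ from finrank_subW_i2 hd3 a b] at h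
        push_cast at h
        convert h using 2 <;> split <;> norm_num
      have ktt := key true true
      have ktf := key true false
      have kft := key false true
      have kff := key false false
      norm_num at ktt ktf kft kff
      refine ⟨by linarith, by linarith, by linarith⟩
    · rintro ⟨hvi, hvb, hvc⟩
      have hv : ∀ j : Fin (n + 1), ((j : ℕ) = i ∨ (j : ℕ) = i + 1 ∨ (j : ℕ) = i + 2) → v j = 0 := by
        rintro j (h | h | h)
        · rw [show j = (⟨i, by omega⟩ : Fin (n + 1)) from Fin.ext h]; exact hvi
        · rw [show j = (⟨i + 1, by omega⟩ : Fin (n + 1)) from Fin.ext h]; exact hvb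
        · rw [show j = (⟨i + 2, by omega⟩ : Fin (n + 1)) from Fin.ext h]; exact hvc
      constructor
      · rw [pairing]
        refine Finset.sum_eq_zero fun j _ => ?_
        by_cases h : (j : ℕ) = i ∨ (j : ℕ) = i + 1 ∨ (j : ℕ) = i + 2
        · rw [hv j h, zero_mul]
        · push_neg at h
          rw [hdz j h.1 h.2.1 h.2.2]
          simp
      · intro N _ _
        rw [pairing]
        refine le_of_eq (Finset.sum_eq_zero fun j _ => ?_)
        by_cases h : (j : ℕ) = i ∨ (j : ℕ) = i + 1 ∨ (j : ℕ) = i + 2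
        · rw [hv j h, zero_mul]
        · push_neg at h
          rw [SubRep.dim_zero _ (hdz j h.1 h.2.1 h.2.2)]
          simp
  refine ⟨hset, ?_⟩
  set f : (Fin (n + 1) → ℝ) →ₗ[ℝ] (Fin 3 → ℝ) := LinearMap.pi
    (fun t => LinearMap.proj (![⟨i, by omega⟩, ⟨i + 1, by omega⟩, ⟨i + 2, by omega⟩] t)) with hf
  have hsurj : LinearMap.range f = ⊤ := by
    rw [LinearMap.range_eq_top]
    intro w
    refine ⟨fun j => if (j : ℕ) = i then w 0 else if (j : ℕ) = i + 1 then w 1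
      else if (j : ℕ) = i + 2 then w 2 else 0, ?_⟩
    funext t
    fin_cases t <;> simp [hf, LinearMap.pi_apply] <;> norm_num <;> omega
  have hrn := LinearMap.finrank_range_add_finrank_ker f
  rw [hsurj, finrank_top, Module.finrank_fin_fun, Module.finrank_fin_fun] at hrn
  refine ⟨LinearMap.ker f, ?_, by omega, by omega⟩
  rw [hset]
  ext v
  simp only [SetLike.mem_coe, LinearMap.mem_ker, Set.mem_setOf_eq]
  constructor
  · intro h
    exact ⟨congrFun h 0, congrFun h 1, congrFun h 2⟩
  · rintro ⟨h0, h1, h2⟩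
    funext t
    fin_cases t
    · exact h0
    · exact h1
    · exact h2
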